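/- arXiv:0901.2993 — 6 statements merged into one kernel-verified Lean document; each statement's English description precedes it below -/
import Mathlib

section
/- For every fixed y = (y₁, y₂) ∈ ℝ², the complex-valued function x ↦ F(x, y) on ℝ² satisfies (∂²/∂x₁² + ∂²/∂x₂²) F(x, y) = 8·y₁·y₂·F(x, y) for all x ∈ ℝ². In particular, if y₁·y₂ = 0 (i.e., y ∈ E = [0,∞)² ∖ (0,∞)²), then x ↦ F(x, y) is harmonic on ℝ². -/
open MeasureTheory Real Set

/-- The lozenge product `x ◊ y = −(x₁+x₂)(y₁+y₂) + i(x₁−x₂)(y₁−y₂)`. -/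
noncomputable def loz (x y : ℝ × ℝ) : ℂ :=
  -(((x.1 + x.2) * (y.1 + y.2) : ℝ) : ℂ) + Complex.I * (((x.1 - x.2) * (y.1 - y.2) : ℝ) : ℂ)

/-- `F(x, y) = exp(x ◊ y)`. -/
noncomputable def Floz (x y : ℝ × ℝ) : ℂ := Complex.exp (loz x y)

lemma expHasDeriv (c d : ℂ) (t : ℝ) :
    HasDerivAt (fun s : ℝ => Complex.exp (c * s + d)) (c * Complex.exp (c * t + d)) t := by
  have h1 : HasDerivAt (fun s : ℝ => c * (s : ℂ) + d) c t := by
    simpa using ((Complex.ofRealCLM.hasDerivAt (x := t)).const_mul c).add_const d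
  simpa [mul_comm] using h1.cexp

lemma expDeriv2 (c d : ℂ) (t : ℝ) :
    deriv (deriv (fun s : ℝ => Complex.exp (c * s + d))) t
      = c * c * Complex.exp (c * t + d) := by
  have h : deriv (fun s : ℝ => Complex.exp (c * s + d))
      = fun t : ℝ => c * Complex.exp (c * t + d) := by
    funext t; exact (expHasDeriv c d t).deriv
  rw [h]
  simpa [mul_assoc] using ((expHasDeriv c d t).const_mul c).deriv

/-- For every fixed `y ∈ ℝ²`, the function `x ↦ F(x,y)` satisfies
`(∂²/∂x₁² + ∂²/∂x₂²) F(x,y) = 8 y₁ y₂ F(x,y)`; in particular, `x ↦ F(x,y)` is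
harmonic whenever `y₁ y₂ = 0`, i.e., whenever `y ∈ E = [0,∞)² \ (0,∞)²`. -/
theorem laplacian_Floz (y : ℝ × ℝ) (x : ℝ × ℝ) :
    (deriv (deriv fun s => Floz (s, x.2) y) x.1
        + deriv (deriv fun s => Floz (x.1, s) y) x.2
      = ((8 * y.1 * y.2 : ℝ) : ℂ) * Floz x y)
    ∧ (y.1 * y.2 = 0 →
        deriv (deriv fun s => Floz (s, x.2) y) x.1
          + deriv (deriv fun s => Floz (x.1, s) y) x.2 = 0) := by
  set c₁ : ℂ := -((y.1 : ℂ) + y.2) + Complex.I * ((y.1 : ℂ) - y.2) with hc1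
  set c₂ : ℂ := -((y.1 : ℂ) + y.2) - Complex.I * ((y.1 : ℂ) - y.2) with hc2
  set d₁ : ℂ := -(x.2 : ℂ) * ((y.1 : ℂ) + y.2) - Complex.I * (x.2 : ℂ) * ((y.1 : ℂ) - y.2) with hd1
  set d₂ : ℂ := -(x.1 : ℂ) * ((y.1 : ℂ) + y.2) + Complex.I * (x.1 : ℂ) * ((y.1 : ℂ) - y.2) with hd2
  have hf1 : (fun s : ℝ => Floz (s, x.2) y) = fun s : ℝ => Complex.exp (c₁ * s + d₁) := by
    funext s; unfold Floz loz; push_cast; ring_nf; rw [hc1, hd1]; ring_nf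
  have hf2 : (fun s : ℝ => Floz (x.1, s) y) = fun s : ℝ => Complex.exp (c₂ * s + d₂) := by
    funext s; unfold Floz loz; push_cast; ring_nf; rw [hc2, hd2]; ring_nf
  have hFl : Complex.exp (c₁ * x.1 + d₁) = Floz x y := by
    unfold Floz loz; push_cast; ring_nf; rw [hc1, hd1]; ring_nf
  have hFl2 : Complex.exp (c₂ * x.2 + d₂) = Floz x y := by
    unfold Floz loz; push_cast; ring_nf; rw [hc2, hd2]; ring_nf
  have key : deriv (deriv fun s => Floz (s, x.2) y) x.1
        + deriv (deriv fun s => Floz (x.1, s) y) x.2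
      = ((8 * y.1 * y.2 : ℝ) : ℂ) * Floz x y := by
    rw [hf1, hf2, expDeriv2, expDeriv2, hFl, hFl2]
    rw [← hFl]
    have hc : c₁ * c₁ + c₂ * c₂ = ((8 * y.1 * y.2 : ℝ) : ℂ) := by
      rw [hc1, hc2]; push_cast
      have := Complex.I_sq
      ring_nf
      rw [Complex.I_sq]
      ring
    rw [hFl]
    calc c₁ * c₁ * Floz x y + c₂ * c₂ * Floz x y
        = (c₁ * c₁ + c₂ * c₂) * Floz x y := by ring
      _ = ((8 * y.1 * y.2 : ℝ) : ℂ) * Floz x y := by rw [hc]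
  refine ⟨key, fun h => ?_⟩
  rw [key, show (8:ℝ)*y.1*y.2 = 0 by rw [mul_assoc, h, mul_zero]]
  simp
end

section
/- For all real numbers u, v > 0, the first coordinate of the harmonic measure has mean u: ∫ z₁ Q_{(u,v)}(dz) = u, i.e., ∫₀^∞ ū·(4/π)·u·v·ū/(4u²v² + (ū² + v² − u²)²) dū = u. Symmetrically, ∫ z₂ Q_{(u,v)}(dz) = v. -/
open MeasureTheory Real Set

section Aux
open Filter Topology


lemma key (u v : ℝ) (hu : 0 < u) (hv : 0 < v) :
    ∫ t in Ioi (0 : ℝ),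
        t * ((4 / π) * (u * v * t) / (4 * u ^ 2 * v ^ 2 + (t ^ 2 + v ^ 2 - u ^ 2) ^ 2)) = u := by
  set F : ℝ → ℝ := fun t => (v / π) *
      ((Real.log ((t - u) ^ 2 + v ^ 2) - Real.log ((t + u) ^ 2 + v ^ 2)) / 2
        + (u / v) * (Real.arctan ((t - u) / v) + Real.arctan ((t + u) / v))) with hF
  have hA : ∀ t : ℝ, 0 < (t - u) ^ 2 + v ^ 2 := fun t => by positivity
  have hB : ∀ t : ℝ, 0 < (t + u) ^ 2 + v ^ 2 := fun t => by positivity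
  have hD : ∀ t : ℝ, 0 < 4 * u ^ 2 * v ^ 2 + (t ^ 2 + v ^ 2 - u ^ 2) ^ 2 := fun t => by positivity
  have hπ : (0:ℝ) < π := Real.pi_pos
  -- derivative
  have hderiv : ∀ t : ℝ, HasDerivAt F
      (t * ((4 / π) * (u * v * t) / (4 * u ^ 2 * v ^ 2 + (t ^ 2 + v ^ 2 - u ^ 2) ^ 2))) t := by
    intro t
    have h1 : HasDerivAt (fun t : ℝ => (t - u) ^ 2 + v ^ 2) (2 * (t - u)) t := by
      simpa using (((hasDerivAt_id t).sub_const u).pow 2).add_const (v ^ 2)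
    have h2 : HasDerivAt (fun t : ℝ => (t + u) ^ 2 + v ^ 2) (2 * (t + u)) t := by
      simpa using (((hasDerivAt_id t).add_const u).pow 2).add_const (v ^ 2)
    have hl1 : HasDerivAt (fun t : ℝ => Real.log ((t - u) ^ 2 + v ^ 2))
        (((t - u) ^ 2 + v ^ 2)⁻¹ * (2 * (t - u))) t :=
      by have := (Real.hasDerivAt_log (hA t).ne').comp t h1; exact this
    have hl2 : HasDerivAt (fun t : ℝ => Real.log ((t + u) ^ 2 + v ^ 2))
        (((t + u) ^ 2 + v ^ 2)⁻¹ * (2 * (t + u))) t :=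
      by have := (Real.hasDerivAt_log (hB t).ne').comp t h2; exact this
    have ha1 : HasDerivAt (fun t : ℝ => Real.arctan ((t - u) / v))
        ((1 / (1 + ((t - u) / v) ^ 2)) * (1 / v)) t := by
      exact (Real.hasDerivAt_arctan ((t - u) / v)).comp t
        (by simpa using ((hasDerivAt_id t).sub_const u).div_const v :
          HasDerivAt (fun x : ℝ => (x - u) / v) (1 / v) t)
    have ha2 : HasDerivAt (fun t : ℝ => Real.arctan ((t + u) / v))
        ((1 / (1 + ((t + u) / v) ^ 2)) * (1 / v)) t := by
      exact (Real.hasDerivAt_arctan ((t + u) / v)).comp t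
        (by simpa using ((hasDerivAt_id t).add_const u).div_const v :
          HasDerivAt (fun x : ℝ => (x + u) / v) (1 / v) t)
    have H := (((hl1.sub hl2).div_const 2).add
        (((ha1.add ha2)).const_mul (u / v))).const_mul (v / π)
    refine H.congr_deriv (Eq.symm ?_)
    have h1v : (1 : ℝ) + ((t - u) / v) ^ 2 ≠ 0 := by positivity
    have h2v : (1 : ℝ) + ((t + u) / v) ^ 2 ≠ 0 := by positivity
    field_simp
    ring
  -- nonnegativity
  have hpos : ∀ t ∈ Ioi (0:ℝ), 0 ≤
      t * ((4 / π) * (u * v * t) / (4 * u ^ 2 * v ^ 2 + (t ^ 2 + v ^ 2 - u ^ 2) ^ 2)) := by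
    intro t ht
    have ht : 0 < t := ht
    positivity
  -- limit at infinity
  have hlog : Tendsto (fun t : ℝ =>
      Real.log ((t - u) ^ 2 + v ^ 2) - Real.log ((t + u) ^ 2 + v ^ 2)) atTop (𝓝 0) := by
    have c1 : ContinuousAt (fun s : ℝ => Real.log ((1 - u * s) ^ 2 + (v * s) ^ 2)) 0 := by
      have hf : ContinuousAt (fun s : ℝ => (1 - u * s) ^ 2 + (v * s) ^ 2) 0 := by fun_prop
      exact (Real.continuousAt_log (by norm_num)).comp hf
    have c2 : ContinuousAt (fun s : ℝ => Real.log ((1 + u * s) ^ 2 + (v * s) ^ 2)) 0 := by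
      have hf : ContinuousAt (fun s : ℝ => (1 + u * s) ^ 2 + (v * s) ^ 2) 0 := by fun_prop
      exact (Real.continuousAt_log (by norm_num)).comp hf
    have hG : Tendsto (fun s : ℝ => Real.log ((1 - u * s) ^ 2 + (v * s) ^ 2)
        - Real.log ((1 + u * s) ^ 2 + (v * s) ^ 2)) (𝓝 0) (𝓝 0) := by
      have := (c1.sub c2).tendsto
      simpa [Pi.sub_def] using this
    have hcomp := hG.comp tendsto_inv_atTop_zero
    apply hcomp.congr'
    filter_upwards [eventually_gt_atTop (0:ℝ)] with t ht
    have ht2 : (t:ℝ) ^ 2 ≠ 0 := by positivity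
    have e1 : (1 - u * t⁻¹) ^ 2 + (v * t⁻¹) ^ 2 = ((t - u) ^ 2 + v ^ 2) / t ^ 2 := by
      field_simp
    have e2 : (1 + u * t⁻¹) ^ 2 + (v * t⁻¹) ^ 2 = ((t + u) ^ 2 + v ^ 2) / t ^ 2 := by
      field_simp
    simp only [Function.comp_apply, e1, e2,
      Real.log_div (hA t).ne' ht2, Real.log_div (hB t).ne' ht2]
    ring
  have harc1 : Tendsto (fun t : ℝ => Real.arctan ((t - u) / v)) atTop (𝓝 (π / 2)) := by
    apply (Real.tendsto_arctan_atTop.mono_right nhdsWithin_le_nhds).comp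
    apply Tendsto.atTop_div_const hv
    exact tendsto_atTop_add_const_right _ (-u) tendsto_id |>.congr (fun x => by simp [sub_eq_add_neg])
  have harc2 : Tendsto (fun t : ℝ => Real.arctan ((t + u) / v)) atTop (𝓝 (π / 2)) := by
    apply (Real.tendsto_arctan_atTop.mono_right nhdsWithin_le_nhds).comp
    apply Tendsto.atTop_div_const hv
    exact tendsto_atTop_add_const_right _ u tendsto_id
  have hlim : Tendsto F atTop (𝓝 u) := by
    have := (((hlog.div_const 2).add ((harc1.add harc2).const_mul (u / v))).const_mul (v / π))
    convert this using 2
    field_simp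
    ring
  have hF0 : F 0 = 0 := by
    have e : ((0:ℝ) - u) ^ 2 = ((0:ℝ) + u) ^ 2 := by ring
    simp [hF, e, neg_div, Real.arctan_neg, show ((0:ℝ) - u) / v = -(u / v) by ring,
      show ((0:ℝ) + u) / v = u / v by ring]
  have hcont : ContinuousWithinAt F (Ici (0:ℝ)) 0 := (hderiv 0).continuousAt.continuousWithinAt
  have := MeasureTheory.integral_Ioi_of_hasDerivAt_of_nonneg hcont
    (fun x _ => hderiv x) hpos hlim
  rw [this, hF0, sub_zero]

end Aux

/-- For `u, v > 0`, the coordinates of the harmonic measure `Q_{(u,v)}` have means `u`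
and `v` respectively: `∫ z₁ Q_{(u,v)}(dz) = u` and `∫ z₂ Q_{(u,v)}(dz) = v`, written out
explicitly as integrals against the two boundary densities. -/
theorem harmonic_measure_mean (u v : ℝ) (hu : 0 < u) (hv : 0 < v) :
    (∫ t in Ioi (0 : ℝ),
        t * ((4 / π) * (u * v * t) / (4 * u ^ 2 * v ^ 2 + (t ^ 2 + v ^ 2 - u ^ 2) ^ 2)) = u)
    ∧ (∫ t in Ioi (0 : ℝ),
        t * ((4 / π) * (u * v * t) / (4 * u ^ 2 * v ^ 2 + (t ^ 2 + u ^ 2 - v ^ 2) ^ 2)) = v) := by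
  refine ⟨key u v hu hv, ?_⟩
  have h : (fun t : ℝ => t * ((4 / π) * (u * v * t) / (4 * u ^ 2 * v ^ 2 + (t ^ 2 + u ^ 2 - v ^ 2) ^ 2)))
      = fun t : ℝ => t * ((4 / π) * (v * u * t) / (4 * v ^ 2 * u ^ 2 + (t ^ 2 + u ^ 2 - v ^ 2) ^ 2)) := by
    funext t; ring
  rw [h]
  exact key v u hv hu
end

section
/- The harmonic measure depends continuously on its starting point: for every bounded continuous function f : E → ℝ, the map [0,∞)² → ℝ, x ↦ ∫ f dQ_x, is continuous (including at boundary points x ∈ E, where Q_x = δ_x). -/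
open MeasureTheory Real Set

noncomputable def Qdens (u v t : ℝ) : ℝ :=
  (4 / π) * (u * v * t) / (4 * u ^ 2 * v ^ 2 + (t ^ 2 + v ^ 2 - u ^ 2) ^ 2)

/-- The harmonic measure `Q_x` of planar Brownian motion started at `x ∈ [0,∞)²` and
stopped upon leaving the open quadrant `(0,∞)²`; for `x ∈ E = [0,∞)² \ (0,∞)²` it is
the Dirac measure `δ_x`. -/
noncomputable def Qmeas (x : ℝ × ℝ) : Measure (ℝ × ℝ) :=
  if 0 < x.1 ∧ 0 < x.2 then
    Measure.map (fun t => (t, (0 : ℝ)))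
      ((volume.restrict (Ioi (0 : ℝ))).withDensity fun t => ENNReal.ofReal (Qdens x.1 x.2 t))
    + Measure.map (fun t => ((0 : ℝ), t))
      ((volume.restrict (Ioi (0 : ℝ))).withDensity fun t => ENNReal.ofReal (Qdens x.2 x.1 t))
  else Measure.dirac x

/-- The boundary set `E = [0,∞)² \ (0,∞)²` of the quadrant. -/
def Eset : Set (ℝ × ℝ) := {p | (0 ≤ p.1 ∧ 0 ≤ p.2) ∧ (p.1 = 0 ∨ p.2 = 0)}

/-- retraction onto Eset -/
noncomputable def rr (p : ℝ × ℝ) : ℝ × ℝ :=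
  (max (p.1 - max p.2 0) 0, max (p.2 - max p.1 0) 0)

lemma rr_mem (p : ℝ × ℝ) : rr p ∈ Eset := by
  refine ⟨⟨le_max_right _ _, le_max_right _ _⟩, ?_⟩
  by_cases h : p.1 - max p.2 0 ≤ 0
  · left; simp [rr, max_eq_right h]
  · right
    push_neg at h
    have h1 : max p.2 0 < p.1 := by linarith
    have h2 : p.2 ≤ max p.2 0 := le_max_left _ _
    have h3 : p.1 ≤ max p.1 0 := le_max_left _ _
    have : p.2 - max p.1 0 ≤ 0 := by linarith
    simp [rr, max_eq_right this]

lemma rr_fix {p : ℝ × ℝ} (hp : p ∈ Eset) : rr p = p := by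
  obtain ⟨⟨h1, h2⟩, h3 | h3⟩ := hp
  · have e0 : (0:ℝ) ≤ max p.2 0 := le_max_right _ _
    have e1 : p.1 - max p.2 0 ≤ 0 := by linarith
    have e2 : max p.1 0 = 0 := by rw [h3]; exact max_self 0
    unfold rr
    rw [e2, Prod.ext_iff]
    exact ⟨by rw [max_eq_right e1, h3], by rw [sub_zero, max_eq_left h2]⟩
  · have e0 : (0:ℝ) ≤ max p.1 0 := le_max_right _ _
    have e1 : p.2 - max p.1 0 ≤ 0 := by linarith
    have e2 : max p.2 0 = 0 := by rw [h3]; exact max_self 0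
    unfold rr
    rw [e2, Prod.ext_iff]
    exact ⟨by rw [sub_zero, max_eq_left h1], by rw [max_eq_right e1, h3]⟩

lemma continuous_rr : Continuous rr := by
  unfold rr; fun_prop

noncomputable def hh (s : ℝ) : ℝ × ℝ := (Real.sqrt s, Real.sqrt (-s))

lemma hh_mem (s : ℝ) : hh s ∈ Eset := by
  refine ⟨⟨Real.sqrt_nonneg _, Real.sqrt_nonneg _⟩, ?_⟩
  rcases le_or_gt s 0 with h | h
  · left; exact Real.sqrt_eq_zero_of_nonpos h
  · right; exact Real.sqrt_eq_zero_of_nonpos (by linarith)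

lemma continuous_hh : Continuous hh :=
  Real.continuous_sqrt.prodMk (Real.continuous_sqrt.comp continuous_neg)

lemma hh_sq {t : ℝ} (ht : 0 ≤ t) : hh (t ^ 2) = (t, 0) := by
  unfold hh
  rw [Real.sqrt_sq ht, Real.sqrt_eq_zero_of_nonpos (neg_nonpos.mpr (sq_nonneg t))]

lemma hh_neg_sq {t : ℝ} (ht : 0 ≤ t) : hh (-(t ^ 2)) = (0, t) := by
  unfold hh
  rw [neg_neg, Real.sqrt_sq ht, Real.sqrt_eq_zero_of_nonpos (neg_nonpos.mpr (sq_nonneg t))]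

lemma Qdens_nonneg {u v t : ℝ} (hu : 0 ≤ u) (hv : 0 ≤ v) (ht : 0 ≤ t) :
    0 ≤ Qdens u v t := by
  have := pi_pos
  unfold Qdens
  positivity

lemma Qdens_continuous {u v : ℝ} (hu : 0 < u) (hv : 0 < v) :
    Continuous fun t => Qdens u v t := by
  unfold Qdens
  apply Continuous.div (by fun_prop) (by fun_prop)
  intro t
  positivity

lemma hasDerivAt_A {u v : ℝ} (hu : 0 < u) (hv : 0 < v) (t : ℝ) :
    HasDerivAt (fun s => arctan ((s ^ 2 + v ^ 2 - u ^ 2) / (2 * u * v)))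
      (π * Qdens u v t) t := by
  have h0 : HasDerivAt (fun s : ℝ => s ^ 2 + v ^ 2 - u ^ 2) (2 * t) t := by
    simpa using ((hasDerivAt_pow 2 t).add_const (v ^ 2)).sub_const (u ^ 2)
  have h1 : HasDerivAt (fun s : ℝ => (s ^ 2 + v ^ 2 - u ^ 2) / (2 * u * v))
      (2 * t / (2 * u * v)) t := h0.div_const _
  have h2 := (Real.hasDerivAt_arctan ((t ^ 2 + v ^ 2 - u ^ 2) / (2 * u * v))).comp t h1
  refine h2.congr_deriv ?_
  have huv : (2 * u * v) ≠ 0 := by positivity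
  have hD : 4 * u ^ 2 * v ^ 2 + (t ^ 2 + v ^ 2 - u ^ 2) ^ 2 ≠ 0 := by positivity
  have hπ : π ≠ 0 := pi_ne_zero
  have h3 : 1 + ((t ^ 2 + v ^ 2 - u ^ 2) / (2 * u * v)) ^ 2 ≠ 0 := by positivity
  unfold Qdens
  field_simp
  ring

lemma Qdens_integrableOn {u v : ℝ} (hu : 0 < u) (hv : 0 < v) :
    IntegrableOn (fun t => Qdens u v t) (Ioi (0 : ℝ)) := by
  have huv : (0:ℝ) < 2 * u * v := by positivity
  have htend : Filter.Tendsto (fun s : ℝ => arctan ((s ^ 2 + v ^ 2 - u ^ 2) / (2 * u * v)))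
      Filter.atTop (nhds (π / 2)) := by
    have h1 : Filter.Tendsto (fun s : ℝ => (s ^ 2 + v ^ 2 - u ^ 2) / (2 * u * v))
        Filter.atTop Filter.atTop := by
      have hsq : Filter.Tendsto (fun s : ℝ => s ^ 2) Filter.atTop Filter.atTop :=
        Filter.tendsto_pow_atTop (by norm_num)
      have h2 := (Filter.tendsto_atTop_add_const_right Filter.atTop (v ^ 2 - u ^ 2) hsq).atTop_div_const huv
      exact h2.congr (fun s => by ring)
    exact (Real.tendsto_arctan_atTop.comp h1).mono_right nhdsWithin_le_nhds
  have h := integrableOn_Ioi_deriv_of_nonneg' (g' := fun t => π * Qdens u v t)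
    (fun x _ => hasDerivAt_A hu hv x)
    (fun x hx => by
      have := Qdens_nonneg hu.le hv.le (le_of_lt hx)
      have := pi_pos
      positivity) htend
  have h2 := h.const_mul π⁻¹
  have : (fun t => π⁻¹ * (π * Qdens u v t)) = fun t => Qdens u v t := by
    funext t
    rw [← mul_assoc, inv_mul_cancel₀ pi_ne_zero, one_mul]
  rwa [this] at h2

lemma arctan_image {u v : ℝ} (hu : 0 < u) (hv : 0 < v) :
    (fun t => arctan ((t ^ 2 + v ^ 2 - u ^ 2) / (2 * u * v))) '' Ioi 0 =
      Ioo (arctan ((v ^ 2 - u ^ 2) / (2 * u * v))) (π / 2) := by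
  have huv : (0:ℝ) < 2 * u * v := by positivity
  ext y
  simp only [mem_image, mem_Ioi, mem_Ioo]
  constructor
  · rintro ⟨t, ht, rfl⟩
    refine ⟨arctan_strictMono ?_, arctan_lt_pi_div_two _⟩
    rw [div_lt_div_iff_of_pos_right huv]
    nlinarith
  · rintro ⟨h1, h2⟩
    have h0 : -(π / 2) < y := lt_trans (neg_pi_div_two_lt_arctan _) h1
    have hay : arctan (tan y) = y := arctan_tan h0 h2
    have hcw : (v ^ 2 - u ^ 2) / (2 * u * v) < tan y := by
      by_contra hcon
      push_neg at hcon
      have := arctan_strictMono.monotone hcon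
      rw [hay] at this
      linarith
    have hpos : 0 < 2 * u * v * (tan y - (v ^ 2 - u ^ 2) / (2 * u * v)) :=
      mul_pos huv (by linarith)
    refine ⟨Real.sqrt (2 * u * v * (tan y - (v ^ 2 - u ^ 2) / (2 * u * v))), Real.sqrt_pos.mpr hpos, ?_⟩
    have hsq : Real.sqrt (2 * u * v * (tan y - (v ^ 2 - u ^ 2) / (2 * u * v))) ^ 2
        = 2 * u * v * (tan y - (v ^ 2 - u ^ 2) / (2 * u * v)) := Real.sq_sqrt hpos.le
    rw [hsq, ← hay]
    congr 1
    field_simp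
    rw [hay]
    ring

lemma arctan_injOn {u v : ℝ} (hu : 0 < u) (hv : 0 < v) :
    InjOn (fun t => arctan ((t ^ 2 + v ^ 2 - u ^ 2) / (2 * u * v))) (Ioi (0:ℝ)) := by
  have huv : (0:ℝ) < 2 * u * v := by positivity
  intro a ha b hb hab
  simp only at hab
  have h1 := arctan_injective hab
  have h2 : a ^ 2 = b ^ 2 := by
    field_simp at h1
    linarith
  calc a = Real.sqrt (a ^ 2) := (Real.sqrt_sq (le_of_lt ha)).symm
    _ = Real.sqrt (b ^ 2) := by rw [h2]
    _ = b := Real.sqrt_sq (le_of_lt hb)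

lemma cov {u v : ℝ} (hu : 0 < u) (hv : 0 < v) (g : ℝ → ℝ) :
    ∫ θ in Ioo (arctan ((v ^ 2 - u ^ 2) / (2 * u * v))) (π / 2), g θ =
      ∫ t in Ioi (0:ℝ), |π * Qdens u v t| * g (arctan ((t ^ 2 + v ^ 2 - u ^ 2) / (2 * u * v))) := by
  rw [← arctan_image hu hv,
    integral_image_eq_integral_abs_deriv_smul measurableSet_Ioi
      (fun x _ => (hasDerivAt_A hu hv x).hasDerivWithinAt) (arctan_injOn hu hv) g]
  simp [smul_eq_mul]

lemma pushforward_integrable {u v : ℝ} (hu : 0 < u) (hv : 0 < v) {φ : ℝ → ℝ × ℝ}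
    (hφ : Continuous φ) {F : ℝ × ℝ → ℝ} (hF : Continuous F) {C : ℝ} (hC : ∀ z, |F z| ≤ C) :
    Integrable F (Measure.map φ
      ((volume.restrict (Ioi (0:ℝ))).withDensity fun t => ENNReal.ofReal (Qdens u v t))) := by
  rw [integrable_map_measure hF.aestronglyMeasurable hφ.aemeasurable,
    integrable_withDensity_iff ((Qdens_continuous hu hv).measurable.ennreal_ofReal)
      (Filter.Eventually.of_forall fun x => ENNReal.ofReal_lt_top)]
  have heq : (fun t => (F ∘ φ) t * (ENNReal.ofReal (Qdens u v t)).toReal)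
      = fun t => F (φ t) * max (Qdens u v t) 0 := by
    funext t
    rw [ENNReal.toReal_ofReal']
    rfl
  rw [heq]
  apply Integrable.mono' ((Qdens_integrableOn hu hv).const_mul C)
  · exact ((hF.comp hφ).mul ((Qdens_continuous hu hv).max continuous_const)).aestronglyMeasurable
  · filter_upwards [ae_restrict_mem measurableSet_Ioi] with t ht
    have hQ : 0 ≤ Qdens u v t := Qdens_nonneg hu.le hv.le (le_of_lt ht)
    rw [Real.norm_eq_abs, abs_mul, max_eq_left hQ, abs_of_nonneg hQ]
    exact mul_le_mul_of_nonneg_right (hC _) hQ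

lemma pushforward_integral {u v : ℝ} (hu : 0 < u) (hv : 0 < v) {φ : ℝ → ℝ × ℝ}
    (hφ : Continuous φ) {F : ℝ × ℝ → ℝ} (hF : Continuous F) :
    ∫ z, F z ∂(Measure.map φ
      ((volume.restrict (Ioi (0:ℝ))).withDensity fun t => ENNReal.ofReal (Qdens u v t)))
      = ∫ t in Ioi (0:ℝ), Qdens u v t * F (φ t) := by
  have hmeas : Measurable fun t => Real.toNNReal (Qdens u v t) :=
    measurable_real_toNNReal.comp (Qdens_continuous hu hv).measurable
  rw [integral_map hφ.aemeasurable hF.aestronglyMeasurable]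
  have : (fun t => ENNReal.ofReal (Qdens u v t))
      = fun t => ((Real.toNNReal (Qdens u v t) : NNReal) : ENNReal) := rfl
  rw [this, integral_withDensity_eq_integral_smul hmeas]
  apply setIntegral_congr_fun measurableSet_Ioi
  intro t ht
  have hQ : 0 ≤ Qdens u v t := Qdens_nonneg hu.le hv.le (le_of_lt ht)
  simp only [NNReal.smul_def, smul_eq_mul, Real.coe_toNNReal _ hQ]

lemma integral_Ioo_comp_neg (g : ℝ → ℝ) (a b : ℝ) :
    ∫ x in Ioo a b, g (-x) = ∫ x in Ioo (-b) (-a), g x := by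
  rcases le_or_gt a b with h | h
  · rw [← integral_Ioc_eq_integral_Ioo, ← integral_Ioc_eq_integral_Ioo,
      ← intervalIntegral.integral_of_le h, ← intervalIntegral.integral_of_le (neg_le_neg h),
      intervalIntegral.integral_comp_neg]
  · rw [Ioo_eq_empty (by linarith), Ioo_eq_empty (by linarith)]
    simp

lemma interior_eq {F : ℝ × ℝ → ℝ} (hF : Continuous F) {C : ℝ} (hC : ∀ z, |F z| ≤ C)
    {u v : ℝ} (hu : 0 < u) (hv : 0 < v) :
    ∫ z, F z ∂(Qmeas (u, v)) =
      π⁻¹ * ∫ θ in Ioo (-(π / 2)) (π / 2), F (hh (u ^ 2 - v ^ 2 + 2 * u * v * Real.tan θ)) := by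
  have huv : (0:ℝ) < 2 * u * v := by positivity
  set c := arctan ((v ^ 2 - u ^ 2) / (2 * u * v)) with hc
  have hc1 : -(π / 2) < c := neg_pi_div_two_lt_arctan _
  have hc2 : c < π / 2 := arctan_lt_pi_div_two _
  set H : ℝ → ℝ := fun θ => F (hh (u ^ 2 - v ^ 2 + 2 * u * v * Real.tan θ)) with hH
  have stepA : ∫ t in Ioi (0:ℝ), Qdens u v t * F (t, 0)
      = π⁻¹ * ∫ θ in Ioo c (π / 2), H θ := by
    have h1 := cov hu hv H
    have h2 : (∫ t in Ioi (0:ℝ),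
        |π * Qdens u v t| * H (arctan ((t ^ 2 + v ^ 2 - u ^ 2) / (2 * u * v))))
        = ∫ t in Ioi (0:ℝ), π * (Qdens u v t * F (t, 0)) := by
      apply setIntegral_congr_fun measurableSet_Ioi
      intro t ht
      have hQ : 0 ≤ Qdens u v t := Qdens_nonneg hu.le hv.le (le_of_lt ht)
      have hπ := pi_pos
      have e1 : H (arctan ((t ^ 2 + v ^ 2 - u ^ 2) / (2 * u * v))) = F (t, 0) := by
        rw [hH]
        simp only
        rw [tan_arctan]
        have e2 : u ^ 2 - v ^ 2 + 2 * u * v * ((t ^ 2 + v ^ 2 - u ^ 2) / (2 * u * v))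
            = t ^ 2 := by field_simp; ring
        rw [e2, hh_sq (le_of_lt ht)]
      show |π * Qdens u v t| * H (arctan ((t ^ 2 + v ^ 2 - u ^ 2) / (2 * u * v)))
          = π * (Qdens u v t * F (t, 0))
      rw [e1, abs_of_nonneg (by positivity)]
      ring
    rw [h2, integral_const_mul] at h1
    rw [h1, ← mul_assoc, inv_mul_cancel₀ pi_ne_zero, one_mul]
  have stepB : ∫ t in Ioi (0:ℝ), Qdens v u t * F (0, t)
      = π⁻¹ * ∫ θ in Ioo (-(π / 2)) c, H θ := by
    have h1 := cov hv hu (fun θ => H (-θ))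
    have e0 : arctan ((u ^ 2 - v ^ 2) / (2 * v * u)) = -c := by
      rw [hc, ← arctan_neg]
      congr 1
      ring
    rw [e0] at h1
    have h2 : (∫ t in Ioi (0:ℝ),
        |π * Qdens v u t| * H (-arctan ((t ^ 2 + u ^ 2 - v ^ 2) / (2 * v * u))))
        = ∫ t in Ioi (0:ℝ), π * (Qdens v u t * F (0, t)) := by
      apply setIntegral_congr_fun measurableSet_Ioi
      intro t ht
      have hQ : 0 ≤ Qdens v u t := Qdens_nonneg hv.le hu.le (le_of_lt ht)
      have hπ := pi_pos
      have e1 : H (-arctan ((t ^ 2 + u ^ 2 - v ^ 2) / (2 * v * u))) = F (0, t) := by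
        rw [hH]
        simp only
        rw [Real.tan_neg, tan_arctan]
        have e2 : u ^ 2 - v ^ 2 + 2 * u * v * -((t ^ 2 + u ^ 2 - v ^ 2) / (2 * v * u))
            = -(t ^ 2) := by field_simp; ring
        rw [e2, hh_neg_sq (le_of_lt ht)]
      show |π * Qdens v u t| * H (-arctan ((t ^ 2 + u ^ 2 - v ^ 2) / (2 * v * u)))
          = π * (Qdens v u t * F (0, t))
      rw [e1, abs_of_nonneg (by positivity)]
      ring
    rw [h2, integral_const_mul] at h1
    have h3 := integral_Ioo_comp_neg H (-c) (π / 2)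
    rw [neg_neg] at h3
    rw [h3] at h1
    rw [h1, ← mul_assoc, inv_mul_cancel₀ pi_ne_zero, one_mul]
  have hHcont : ContinuousOn H (Ioo (-(π / 2)) (π / 2)) := by
    have htan : ContinuousOn Real.tan (Ioo (-(π / 2)) (π / 2)) :=
      Real.continuousOn_tan.mono (fun x hx => (Real.cos_pos_of_mem_Ioo hx).ne')
    exact ((hF.comp (continuous_hh.comp (by fun_prop :
      Continuous fun s : ℝ => u ^ 2 - v ^ 2 + 2 * u * v * s)))).comp_continuousOn htan
  have hHint : IntegrableOn H (Ioo (-(π / 2)) (π / 2)) := by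
    apply Integrable.mono' (integrableOn_const measure_Ioo_lt_top.ne)
    · exact hHcont.aestronglyMeasurable measurableSet_Ioo
    · filter_upwards with θ using by simpa [Real.norm_eq_abs, hH] using hC _
  have hdisj : Disjoint (Ioo (-(π / 2)) c) (Ico c (π / 2)) := by
    apply Set.disjoint_left.mpr
    rintro x ⟨_, hx2⟩ ⟨hx3, _⟩
    exact absurd hx3 (not_le.mpr hx2)
  have hsub : Ico c (π / 2) ⊆ Ioo (-(π / 2)) (π / 2) :=
    fun x hx => ⟨lt_of_lt_of_le hc1 hx.1, hx.2⟩
  have hsplit : (∫ θ in Ioo (-(π / 2)) (π / 2), H θ)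
      = (∫ θ in Ioo (-(π / 2)) c, H θ) + ∫ θ in Ioo c (π / 2), H θ := by
    rw [← Ioo_union_Ico_eq_Ioo hc1 hc2.le,
      setIntegral_union hdisj measurableSet_Ico
        (hHint.mono_set (Ioo_subset_Ioo le_rfl hc2.le)) (hHint.mono_set hsub),
      integral_Ico_eq_integral_Ioo]
  unfold Qmeas
  rw [if_pos (⟨hu, hv⟩ : 0 < ((u, v) : ℝ × ℝ).1 ∧ 0 < ((u, v) : ℝ × ℝ).2)]
  rw [integral_add_measure (pushforward_integrable hu hv (by fun_prop) hF hC)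
      (pushforward_integrable hv hu (by fun_prop) hF hC),
    pushforward_integral hu hv (by fun_prop) hF, pushforward_integral hv hu (by fun_prop) hF]
  rw [stepA, stepB, hsplit]
  ring

lemma boundary_val {F : ℝ × ℝ → ℝ} {x : ℝ × ℝ} (hx : x ∈ Eset) :
    π⁻¹ * ∫ θ in Ioo (-(π / 2)) (π / 2),
      F (hh (x.1 ^ 2 - x.2 ^ 2 + 2 * x.1 * x.2 * Real.tan θ)) = F x := by
  obtain ⟨⟨h1, h2⟩, h3 | h3⟩ := hx
  · have e : ∀ θ : ℝ, F (hh (x.1 ^ 2 - x.2 ^ 2 + 2 * x.1 * x.2 * Real.tan θ)) = F x := by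
      intro θ
      have e1 : x.1 ^ 2 - x.2 ^ 2 + 2 * x.1 * x.2 * Real.tan θ = -(x.2 ^ 2) := by
        rw [h3]; ring
      rw [e1, hh_neg_sq h2, ← h3]
    simp_rw [e]
    rw [setIntegral_const]
    rw [Real.volume_real_Ioo_of_le (by linarith [pi_pos])]
    rw [show (π / 2 - -(π / 2)) = π by ring]
    rw [smul_eq_mul, ← mul_assoc, inv_mul_cancel₀ pi_ne_zero, one_mul]
  · have e : ∀ θ : ℝ, F (hh (x.1 ^ 2 - x.2 ^ 2 + 2 * x.1 * x.2 * Real.tan θ)) = F x := by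
      intro θ
      have e1 : x.1 ^ 2 - x.2 ^ 2 + 2 * x.1 * x.2 * Real.tan θ = x.1 ^ 2 := by
        rw [h3]; ring
      rw [e1, hh_sq h1, ← h3]
    simp_rw [e]
    rw [setIntegral_const]
    rw [Real.volume_real_Ioo_of_le (by linarith [pi_pos])]
    rw [show (π / 2 - -(π / 2)) = π by ring]
    rw [smul_eq_mul, ← mul_assoc, inv_mul_cancel₀ pi_ne_zero, one_mul]

lemma Phi_continuous {F : ℝ × ℝ → ℝ} (hF : Continuous F) {C : ℝ} (hC : ∀ z, |F z| ≤ C) :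
    Continuous fun x : ℝ × ℝ => π⁻¹ * ∫ θ in Ioo (-(π / 2)) (π / 2),
      F (hh (x.1 ^ 2 - x.2 ^ 2 + 2 * x.1 * x.2 * Real.tan θ)) := by
  refine continuous_const.mul ?_
  rw [continuous_iff_continuousAt]
  intro x₀
  apply continuousAt_of_dominated (bound := fun _ => C)
  · filter_upwards with x
    have htan : ContinuousOn Real.tan (Ioo (-(π / 2)) (π / 2)) :=
      Real.continuousOn_tan.mono (fun y hy => (Real.cos_pos_of_mem_Ioo hy).ne')
    exact (((hF.comp (continuous_hh.comp (by fun_prop :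
      Continuous fun s : ℝ => x.1 ^ 2 - x.2 ^ 2 + 2 * x.1 * x.2 * s)))).comp_continuousOn
      htan).aestronglyMeasurable measurableSet_Ioo
  · filter_upwards with x
    filter_upwards with θ using by simpa [Real.norm_eq_abs] using hC _
  · exact integrableOn_const measure_Ioo_lt_top.ne
  · filter_upwards with θ
    exact (hF.comp (continuous_hh.comp (by fun_prop :
      Continuous fun x : ℝ × ℝ => x.1 ^ 2 - x.2 ^ 2 + 2 * x.1 * x.2 * Real.tan θ))).continuousAt

lemma Eset_closed : IsClosed Eset := by
  have h : Eset = ({p : ℝ × ℝ | 0 ≤ p.1} ∩ {p | 0 ≤ p.2}) ∩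
      ({p : ℝ × ℝ | p.1 = 0} ∪ {p | p.2 = 0}) := rfl
  rw [h]
  exact (((isClosed_le continuous_const continuous_fst).inter
    (isClosed_le continuous_const continuous_snd)).inter
    (((isClosed_eq continuous_fst continuous_const)).union
      (isClosed_eq continuous_snd continuous_const)))

lemma Qmeas_ae_Eset {u v : ℝ} (hu : 0 < u) (hv : 0 < v) :
    ∀ᵐ z ∂(Qmeas (u, v)), z ∈ Eset := by
  have hEm : MeasurableSet Eset := Eset_closed.measurableSet
  rw [ae_iff]
  have hone : {z : ℝ × ℝ | ¬z ∈ Eset} = Esetᶜ := rfl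
  rw [hone]
  unfold Qmeas
  rw [if_pos (⟨hu, hv⟩ : 0 < ((u, v) : ℝ × ℝ).1 ∧ 0 < ((u, v) : ℝ × ℝ).2)]
  rw [Measure.add_apply,
    Measure.map_apply (by fun_prop) hEm.compl,
    Measure.map_apply (by fun_prop) hEm.compl]
  have key : ∀ (w : ℝ → ENNReal) (S : Set ℝ), S ⊆ Iio 0 →
      ((volume.restrict (Ioi (0:ℝ))).withDensity w) S = 0 := by
    intro w S hS
    apply measure_mono_null hS
    rw [withDensity_apply _ measurableSet_Iio]
    apply setLIntegral_measure_zero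
    rw [Measure.restrict_apply measurableSet_Iio]
    have : Iio (0:ℝ) ∩ Ioi 0 = ∅ := by
      ext y; simp only [mem_inter_iff, mem_Iio, mem_Ioi, mem_empty_iff_false, iff_false]
      rintro ⟨a, b⟩; linarith
    rw [this]
    simp
  have hpre1 : (fun t : ℝ => (t, (0:ℝ))) ⁻¹' Esetᶜ ⊆ Iio 0 := by
    intro t ht
    simp only [mem_preimage, mem_compl_iff, Eset, mem_setOf_eq] at ht
    push_neg at ht
    simp only [mem_Iio]
    by_contra hcon
    push_neg at hcon
    exact (ht ⟨hcon, le_rfl⟩).2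
  have hpre2 : (fun t : ℝ => ((0:ℝ), t)) ⁻¹' Esetᶜ ⊆ Iio 0 := by
    intro t ht
    simp only [mem_preimage, mem_compl_iff, Eset, mem_setOf_eq] at ht
    push_neg at ht
    simp only [mem_Iio]
    by_contra hcon
    push_neg at hcon
    exact (ht ⟨le_rfl, hcon⟩).1
  rw [key _ _ hpre1, key _ _ hpre2, add_zero]

/-- The harmonic measure depends continuously on its starting point: for every bounded
continuous `f : E → ℝ`, the map `x ↦ ∫ f dQ_x` is continuous on `[0,∞)²`. -/
theorem harmonic_measure_continuous (f : ℝ × ℝ → ℝ)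
    (hf : ContinuousOn f Eset) (hb : ∃ C, ∀ z ∈ Eset, |f z| ≤ C) :
    ContinuousOn (fun x => ∫ z, f z ∂(Qmeas x)) {x : ℝ × ℝ | 0 ≤ x.1 ∧ 0 ≤ x.2} := by
  obtain ⟨C, hbC⟩ := hb
  set ft : ℝ × ℝ → ℝ := fun z => f (rr z) with hft
  have hFt : Continuous ft := hf.comp_continuous continuous_rr rr_mem
  have hCt : ∀ z, |ft z| ≤ C := fun z => hbC _ (rr_mem z)
  apply ContinuousOn.congr ((Phi_continuous hFt hCt).continuousOn)
  intro x hx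
  simp only [mem_setOf_eq] at hx
  by_cases hint : 0 < x.1 ∧ 0 < x.2
  · obtain ⟨u, v⟩ := x
    have h1 : ∫ z, f z ∂(Qmeas (u, v)) = ∫ z, ft z ∂(Qmeas (u, v)) := by
      apply integral_congr_ae
      filter_upwards [Qmeas_ae_Eset hint.1 hint.2] with z hz
      exact (congrArg f (rr_fix hz)).symm
    show ∫ z, f z ∂(Qmeas (u, v)) = _
    rw [h1, interior_eq hFt hCt hint.1 hint.2]
  · have hxE : x ∈ Eset := by
      refine ⟨hx, ?_⟩
      rcases not_and_or.mp hint with h | h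
      · left; exact le_antisymm (not_lt.mp h) hx.1
      · right; exact le_antisymm (not_lt.mp h) hx.2
    have h1 : Qmeas x = Measure.dirac x := by unfold Qmeas; rw [if_neg hint]
    show ∫ z, f z ∂(Qmeas x) = _
    rw [h1, integral_dirac]
    beta_reduce
    rw [boundary_val (F := ft) hxE]
    exact (congrArg f (rr_fix hxE)).symm
end

section
/- For all real numbers u, v > 0 and every p ∈ (0,2), the integral bound 4·∫₀^∞ min(1, u·(2π)^{−1/2}·t^{−1/p}) · min(1, v·(2π)^{−1/2}·t^{−1/p}) dt ≤ 8/((2−p)·(2π)^{p/2}) · (uv)^{p/2} holds. -/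
open MeasureTheory Real Set

lemma key_eq (c p : ℝ) (hc : 0 < c) (hp0 : 0 < p) (hp2 : p < 2) :
    ∫ t in Ioi (0 : ℝ), min 1 (c * t ^ (-2 / p)) = 2 / (2 - p) * c ^ (p / 2) := by
  have hpne : p ≠ 0 := hp0.ne'
  have hp2' : (2 : ℝ) - p ≠ 0 := by linarith
  set a : ℝ := -2 / p with ha
  have ha0 : a ≤ 0 := by
    rw [ha]
    apply div_nonpos_of_nonpos_of_nonneg <;> linarith
  have hal : a < -1 := by
    rw [ha, div_lt_iff₀ hp0]; linarith
  set T : ℝ := c ^ (p / 2) with hT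
  have hT0 : 0 < T := rpow_pos_of_pos hc _
  have hTa : T ^ a = c⁻¹ := by
    rw [hT, ← Real.rpow_mul hc.le]
    have h : p / 2 * a = -1 := by rw [ha]; field_simp
    rw [h, Real.rpow_neg_one]
  have hsplit : (Ioi (0:ℝ)) = Ioc 0 T ∪ Ioi T := (Ioc_union_Ioi_eq_Ioi hT0.le).symm
  have hg1 : EqOn (fun t : ℝ => min 1 (c * t ^ a)) (fun _ => (1:ℝ)) (Ioc 0 T) := by
    intro t ht
    simp only
    apply min_eq_left
    have h1 : T ^ a ≤ t ^ a := rpow_le_rpow_of_nonpos ht.1 ht.2 ha0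
    calc (1:ℝ) = c * c⁻¹ := by field_simp
    _ = c * T ^ a := by rw [hTa]
    _ ≤ c * t ^ a := by gcongr
  have hg2 : EqOn (fun t : ℝ => min 1 (c * t ^ a)) (fun t => c * t ^ a) (Ioi T) := by
    intro t ht
    simp only
    apply min_eq_right
    have h1 : t ^ a ≤ T ^ a := rpow_le_rpow_of_nonpos hT0 (le_of_lt ht) ha0
    calc c * t ^ a ≤ c * T ^ a := by gcongr
    _ = c * c⁻¹ := by rw [hTa]
    _ = 1 := by field_simp
  have hInt1 : IntegrableOn (fun t : ℝ => min 1 (c * t ^ a)) (Ioc 0 T) := by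
    apply IntegrableOn.congr_fun _ hg1.symm measurableSet_Ioc
    exact integrableOn_const measure_Ioc_lt_top.ne
  have hInt2 : IntegrableOn (fun t : ℝ => min 1 (c * t ^ a)) (Ioi T) := by
    apply IntegrableOn.congr_fun _ hg2.symm measurableSet_Ioi
    exact (integrableOn_Ioi_rpow_of_lt hal hT0).const_mul c
  rw [hsplit, setIntegral_union (Ioc_disjoint_Ioi le_rfl) measurableSet_Ioi hInt1 hInt2,
    setIntegral_congr_fun measurableSet_Ioc hg1,
    setIntegral_congr_fun measurableSet_Ioi hg2]
  rw [setIntegral_const]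
  simp only [Real.volume_Ioc, smul_eq_mul, mul_one]
  rw [Real.volume_real_Ioc_of_le hT0.le, sub_zero]
  rw [integral_const_mul, integral_Ioi_rpow_of_lt hal hT0]
  have hap : a + 1 = (p - 2) / p := by
    rw [ha]; field_simp; ring
  have h1 : T ^ (a + 1) = c ^ ((p - 2) / 2) := by
    rw [hT, ← Real.rpow_mul hc.le]
    congr 1
    rw [hap]; field_simp
  have h2 : c ^ (p / 2) = c * c ^ ((p - 2) / 2) := by
    have e : p / 2 = 1 + (p - 2) / 2 := by ring
    rw [e, Real.rpow_one_add' hc.le (by rw [← e]; exact (div_pos hp0 two_pos).ne')]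
  rw [h1, hap, hT, h2]
  have hp2'' : p - 2 ≠ 0 := by linarith
  generalize c ^ ((p - 2) / 2) = X
  field_simp
  ring

lemma key_int (c p : ℝ) (hc : 0 < c) (hp0 : 0 < p) (hp2 : p < 2) :
    IntegrableOn (fun t : ℝ => min 1 (c * t ^ (-2 / p))) (Ioi 0) := by
  have hpne : p ≠ 0 := hp0.ne'
  set a : ℝ := -2 / p with ha
  have ha0 : a ≤ 0 := by
    rw [ha]
    apply div_nonpos_of_nonpos_of_nonneg <;> linarith
  have hal : a < -1 := by
    rw [ha, div_lt_iff₀ hp0]; linarith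
  set T : ℝ := c ^ (p / 2) with hT
  have hT0 : 0 < T := rpow_pos_of_pos hc _
  have hTa : T ^ a = c⁻¹ := by
    rw [hT, ← Real.rpow_mul hc.le]
    have h : p / 2 * a = -1 := by rw [ha]; field_simp
    rw [h, Real.rpow_neg_one]
  have hsplit : (Ioi (0:ℝ)) = Ioc 0 T ∪ Ioi T := (Ioc_union_Ioi_eq_Ioi hT0.le).symm
  have hg1 : EqOn (fun t : ℝ => min 1 (c * t ^ a)) (fun _ => (1:ℝ)) (Ioc 0 T) := by
    intro t ht
    simp only
    apply min_eq_left
    have h1 : T ^ a ≤ t ^ a := rpow_le_rpow_of_nonpos ht.1 ht.2 ha0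
    calc (1:ℝ) = c * c⁻¹ := by field_simp
    _ = c * T ^ a := by rw [hTa]
    _ ≤ c * t ^ a := by gcongr
  have hg2 : EqOn (fun t : ℝ => min 1 (c * t ^ a)) (fun t => c * t ^ a) (Ioi T) := by
    intro t ht
    simp only
    apply min_eq_right
    have h1 : t ^ a ≤ T ^ a := rpow_le_rpow_of_nonpos hT0 (le_of_lt ht) ha0
    calc c * t ^ a ≤ c * T ^ a := by gcongr
    _ = c * c⁻¹ := by rw [hTa]
    _ = 1 := by field_simp
  have hInt1 : IntegrableOn (fun t : ℝ => min 1 (c * t ^ a)) (Ioc 0 T) := by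
    apply IntegrableOn.congr_fun _ hg1.symm measurableSet_Ioc
    exact integrableOn_const measure_Ioc_lt_top.ne
  have hInt2 : IntegrableOn (fun t : ℝ => min 1 (c * t ^ a)) (Ioi T) := by
    apply IntegrableOn.congr_fun _ hg2.symm measurableSet_Ioi
    exact (integrableOn_Ioi_rpow_of_lt hal hT0).const_mul c
  rw [hsplit]
  exact hInt1.union hInt2

/-- The key calculus estimate for the `p/2`-th moment of the exit time of planar Brownian
motion from the quadrant: for `u, v > 0` and `p ∈ (0,2)`,
`4 ∫₀^∞ min(1, u (2π)^{-1/2} t^{-1/p}) · min(1, v (2π)^{-1/2} t^{-1/p}) dt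
  ≤ 8/((2−p)(2π)^{p/2}) · (uv)^{p/2}`. -/
theorem exit_time_moment_calculus_bound (u v p : ℝ) (hu : 0 < u) (hv : 0 < v)
    (hp0 : 0 < p) (hp2 : p < 2) :
    4 * ∫ t in Ioi (0 : ℝ),
          min 1 (u * (2 * π) ^ (-(1 : ℝ) / 2) * t ^ (-(1 : ℝ) / p))
            * min 1 (v * (2 * π) ^ (-(1 : ℝ) / 2) * t ^ (-(1 : ℝ) / p))
      ≤ 8 / ((2 - p) * (2 * π) ^ (p / 2)) * (u * v) ^ (p / 2) := by
  have hπ : (0:ℝ) < 2 * π := by positivity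
  set A : ℝ := u * (2 * π) ^ (-(1 : ℝ) / 2) with hA
  set B : ℝ := v * (2 * π) ^ (-(1 : ℝ) / 2) with hB
  have hA0 : 0 < A := by positivity
  have hB0 : 0 < B := by positivity
  have hc0 : 0 < A * B := by positivity
  have hIntg : IntegrableOn (fun t : ℝ => min 1 (A * B * t ^ (-2 / p))) (Ioi 0) := by
    exact key_int (A * B) p hc0 hp0 hp2
  have hbound : ∀ t ∈ Ioi (0:ℝ),
      min 1 (A * t ^ (-(1 : ℝ) / p)) * min 1 (B * t ^ (-(1 : ℝ) / p))
        ≤ min 1 (A * B * t ^ (-2 / p)) := by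
    intro t ht
    have ht0 : (0:ℝ) < t := ht
    have htp : (0:ℝ) ≤ t ^ (-(1 : ℝ) / p) := (rpow_pos_of_pos ht0 _).le
    have h1 : (0:ℝ) ≤ min 1 (A * t ^ (-(1 : ℝ) / p)) := le_min zero_le_one (by positivity)
    have h2 : (0:ℝ) ≤ min 1 (B * t ^ (-(1 : ℝ) / p)) := le_min zero_le_one (by positivity)
    apply le_min
    · calc min 1 (A * t ^ (-(1 : ℝ) / p)) * min 1 (B * t ^ (-(1 : ℝ) / p))
          ≤ 1 * 1 := mul_le_mul (min_le_left _ _) (min_le_left _ _) h2 zero_le_one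
      _ = 1 := by ring
    · calc min 1 (A * t ^ (-(1 : ℝ) / p)) * min 1 (B * t ^ (-(1 : ℝ) / p))
          ≤ (A * t ^ (-(1 : ℝ) / p)) * (B * t ^ (-(1 : ℝ) / p)) :=
            mul_le_mul (min_le_right _ _) (min_le_right _ _) h2 (by positivity)
      _ = A * B * (t ^ (-(1 : ℝ) / p) * t ^ (-(1 : ℝ) / p)) := by ring
      _ = A * B * t ^ (-2 / p) := by
            rw [← Real.rpow_add ht0]; congr 1; ring
  have hmono : (∫ t in Ioi (0:ℝ),
      min 1 (A * t ^ (-(1 : ℝ) / p)) * min 1 (B * t ^ (-(1 : ℝ) / p)))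
        ≤ ∫ t in Ioi (0:ℝ), min 1 (A * B * t ^ (-2 / p)) := by
    apply integral_mono_of_nonneg
    · filter_upwards [ae_restrict_mem measurableSet_Ioi] with t ht
      have htp : (0:ℝ) ≤ t ^ (-(1 : ℝ) / p) := (rpow_pos_of_pos ht _).le
      exact mul_nonneg (le_min zero_le_one (by positivity)) (le_min zero_le_one (by positivity))
    · exact hIntg
    · filter_upwards [ae_restrict_mem measurableSet_Ioi] with t ht
      exact hbound t ht
  have hkey := key_eq (A * B) p hc0 hp0 hp2
  have hAB : (A * B) ^ (p / 2) = (u * v) ^ (p / 2) / (2 * π) ^ (p / 2) := by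
    have h1 : A * B = (u * v) * (2 * π) ^ (-(1:ℝ)) := by
      rw [hA, hB]
      rw [show u * (2*π) ^ (-(1:ℝ)/2) * (v * (2*π) ^ (-(1:ℝ)/2))
        = u * v * ((2*π) ^ (-(1:ℝ)/2) * (2*π) ^ (-(1:ℝ)/2)) by ring,
        ← Real.rpow_add hπ]
      norm_num
    rw [h1, Real.mul_rpow (by positivity) (by positivity),
      ← Real.rpow_mul hπ.le, neg_one_mul, Real.rpow_neg hπ.le]
    exact (div_eq_mul_inv _ _).symm
  have hfin : 4 * (2 / (2 - p) * (A * B) ^ (p / 2))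
      = 8 / ((2 - p) * (2 * π) ^ (p / 2)) * (u * v) ^ (p / 2) := by
    rw [hAB]
    have h2p : (2:ℝ) - p ≠ 0 := by linarith
    have hπp : ((2:ℝ) * π) ^ (p / 2) ≠ 0 := by positivity
    field_simp
    ring
  calc 4 * ∫ t in Ioi (0 : ℝ),
          min 1 (A * t ^ (-(1 : ℝ) / p)) * min 1 (B * t ^ (-(1 : ℝ) / p))
      ≤ 4 * ∫ t in Ioi (0:ℝ), min 1 (A * B * t ^ (-2 / p)) := by linarith
    _ = 4 * (2 / (2 - p) * (A * B) ^ (p / 2)) := by rw [hkey]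
    _ = _ := hfin
end

section
/- Let τ be a nonnegative random variable on a probability space satisfying P[τ > t] ≤ 4·min(1, u·(2πt)^{−1/2})·min(1, v·(2πt)^{−1/2}) for all t > 0, where u, v > 0. Then for every p ∈ (1,2), E[τ^{p/2}] ≤ (4/(2π)^{p/2}) · (p/((p−1)(2−p))) · min(u^{p−1}·v, u·v^{p−1}). -/
open MeasureTheory Real Set ENNReal

/-- One-sided layer cake bound without measurability: for any nonnegative real function `f`
and `q ∈ (0,1)` (actually any `0 < q`), `∫⁻ (f^q) ≤ ∫ t in Ioi 0, μ{t < f} · q t^{q-1}`. -/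
lemma layercake_le_aux {Ω : Type*} [MeasurableSpace Ω] (μ : Measure Ω) (f : Ω → ℝ)
    (hf : ∀ ω, 0 ≤ f ω) (q : ℝ) (hq0 : 0 < q) :
    (∫⁻ ω, ENNReal.ofReal (f ω ^ q) ∂μ)
      ≤ ∫⁻ t in Ioi (0:ℝ), μ {ω | t < f ω} * ENNReal.ofReal (q * t ^ (q - 1)) := by
  rw [lintegral_def]
  refine iSup₂_le fun g hg => ?_
  rw [← SimpleFunc.lintegral_eq_lintegral g μ]
  -- `g` is a simple function with `g ≤ ofReal (f ^ q)`, hence finite-valued.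
  have hfin : ∀ ω, g ω ≠ ∞ := fun ω => ne_top_of_le_ne_top ENNReal.ofReal_ne_top (hg ω)
  set h : Ω → ℝ := fun ω => ((g ω).toReal) ^ (1 / q) with hh
  have h_nn : ∀ ω, 0 ≤ h ω := fun ω => rpow_nonneg ENNReal.toReal_nonneg _
  have h_mble : Measurable h := by have hgm := g.measurable; fun_prop
  have h_le : ∀ ω, h ω ≤ f ω := by
    intro ω
    have h1 : (g ω).toReal ≤ f ω ^ q := by
      have := ENNReal.toReal_mono ENNReal.ofReal_ne_top (hg ω)
      rwa [ENNReal.toReal_ofReal (rpow_nonneg (hf ω) q)] at this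
    calc h ω ≤ (f ω ^ q) ^ (1/q) := rpow_le_rpow ENNReal.toReal_nonneg h1 (by positivity)
    _ = f ω := by rw [← Real.rpow_mul (hf ω), mul_one_div, div_self (ne_of_gt hq0), Real.rpow_one]
  have key : ∀ ω, g ω = ENNReal.ofReal (∫ t in (0)..(h ω), q * t ^ (q - 1)) := by
    intro ω
    have : ∫ t in (0)..(h ω), q * t ^ (q - 1) = h ω ^ q := by
      rw [intervalIntegral.integral_const_mul, integral_rpow (Or.inl (by linarith))]
      rw [Real.zero_rpow (by linarith : q - 1 + 1 ≠ 0)]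
      rw [sub_add_cancel, sub_zero]
      field_simp
    rw [this, hh]
    simp only []
    rw [← Real.rpow_mul ENNReal.toReal_nonneg, one_div_mul_cancel (ne_of_gt hq0),
      Real.rpow_one, ENNReal.ofReal_toReal (hfin ω)]
  calc ∫⁻ ω, g ω ∂μ = ∫⁻ ω, ENNReal.ofReal (∫ t in (0)..(h ω), q * t ^ (q - 1)) ∂μ := by
        exact lintegral_congr key
    _ = ∫⁻ t in Ioi (0:ℝ), μ {ω | t < h ω} * ENNReal.ofReal (q * t ^ (q - 1)) := by
        refine lintegral_comp_eq_lintegral_meas_lt_mul μ (ae_of_all _ h_nn) h_mble.aemeasurable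
          (fun t ht => (intervalIntegral.intervalIntegrable_rpow' (by linarith)).const_mul q) ?_
        filter_upwards [self_mem_ae_restrict measurableSet_Ioi] with t ht
        have : (0:ℝ) < t := ht
        positivity
    _ ≤ _ := by
        refine lintegral_mono fun t => ?_
        gcongr
        exact h_le _

lemma aux_bound {Ω : Type*} [MeasurableSpace Ω] (P : Measure Ω)
    [IsProbabilityMeasure P] (τ : Ω → ℝ) (hτ : ∀ ω, 0 ≤ τ ω) (u v : ℝ)
    (hu : 0 < u) (hv : 0 < v)
    (htail : ∀ t : ℝ, 0 < t →
      P {ω | t < τ ω}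
        ≤ ENNReal.ofReal
            (4 * min 1 (u * (2 * π * t) ^ (-(1 : ℝ) / 2))
              * min 1 (v * (2 * π * t) ^ (-(1 : ℝ) / 2))))
    (p : ℝ) (hp1 : 1 < p) (hp2 : p < 2) :
    (∫⁻ ω, ENNReal.ofReal (τ ω ^ (p / 2)) ∂P)
      ≤ ENNReal.ofReal
          ((4 / (2 * π) ^ (p / 2)) * (p / ((p - 1) * (2 - p)))
            * (u ^ (p - 1) * v)) := by
  have hπ : (0:ℝ) < 2 * π := by positivity
  set t₀ : ℝ := u ^ 2 / (2 * π) with ht₀def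
  have ht₀ : 0 < t₀ := by positivity
  set C1 : ℝ := 4 * v * (2 * π) ^ (-(1:ℝ)/2) * (p/2) with hC1def
  set C2 : ℝ := 4 * u * v * (2 * π) ^ (-(1:ℝ)) * (p/2) with hC2def
  have key := layercake_le_aux P τ hτ (p/2) (by linarith)
  -- pointwise bounds on the two pieces
  have hb1 : ∀ t ∈ Ioc (0:ℝ) t₀,
      P {ω | t < τ ω} * ENNReal.ofReal (p/2 * t ^ (p/2 - 1))
        ≤ ENNReal.ofReal (C1 * t ^ (p/2 - 3/2)) := by
    intro t ht'
    have ht : (0:ℝ) < t := ht'.1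
    set X : ℝ := (2 * π * t) ^ (-(1:ℝ)/2) with hX
    have hXpos : 0 < X := by positivity
    set m1 : ℝ := min 1 (u * X)
    set m2 : ℝ := min 1 (v * X)
    set w : ℝ := p/2 * t ^ (p/2 - 1) with hw
    have hwnn : 0 ≤ w := by positivity
    have hm2nn : 0 ≤ m2 := le_min zero_le_one (by positivity)
    calc P {ω | t < τ ω} * ENNReal.ofReal w
        ≤ ENNReal.ofReal (4 * m1 * m2) * ENNReal.ofReal w := by
          gcongr; exact htail t ht
      _ = ENNReal.ofReal (4 * m1 * m2 * w) := by
          rw [← ENNReal.ofReal_mul (by positivity)]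
      _ ≤ ENNReal.ofReal (C1 * t ^ (p/2 - 3/2)) := by
          apply ENNReal.ofReal_le_ofReal
          have hA : m1 * m2 ≤ v * X :=
            le_trans (mul_le_mul (min_le_left _ _) (min_le_right _ _) hm2nn zero_le_one)
              (by rw [one_mul])
          have step : 4 * m1 * m2 * w ≤ 4 * (v * X) * w := by
            have := mul_le_mul_of_nonneg_right
              (mul_le_mul_of_nonneg_left hA (by norm_num : (0:ℝ) ≤ 4)) hwnn
            linarith
          refine le_trans step (le_of_eq ?_)
          have hm : X = (2*π) ^ (-(1:ℝ)/2) * t ^ (-(1:ℝ)/2) := by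
            rw [hX, Real.mul_rpow hπ.le ht.le]
          have hpow : t ^ (-(1:ℝ)/2) * t ^ (p/2 - 1) = t ^ (p/2 - 3/2) := by
            rw [← Real.rpow_add ht]; congr 1; ring
          rw [hm, hw, hC1def, ← hpow]; ring
  have hb2 : ∀ t ∈ Ioi t₀,
      P {ω | t < τ ω} * ENNReal.ofReal (p/2 * t ^ (p/2 - 1))
        ≤ ENNReal.ofReal (C2 * t ^ (p/2 - 2)) := by
    intro t ht'
    have ht : (0:ℝ) < t := lt_trans ht₀ ht'
    set X : ℝ := (2 * π * t) ^ (-(1:ℝ)/2) with hX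
    have hXpos : 0 < X := by positivity
    set m1 : ℝ := min 1 (u * X)
    set m2 : ℝ := min 1 (v * X)
    set w : ℝ := p/2 * t ^ (p/2 - 1) with hw
    have hwnn : 0 ≤ w := by positivity
    have hm2nn : 0 ≤ m2 := le_min zero_le_one (by positivity)
    calc P {ω | t < τ ω} * ENNReal.ofReal w
        ≤ ENNReal.ofReal (4 * m1 * m2) * ENNReal.ofReal w := by
          gcongr; exact htail t ht
      _ = ENNReal.ofReal (4 * m1 * m2 * w) := by
          rw [← ENNReal.ofReal_mul (by positivity)]
      _ ≤ ENNReal.ofReal (C2 * t ^ (p/2 - 2)) := by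
          apply ENNReal.ofReal_le_ofReal
          have hA : m1 * m2 ≤ (u * X) * (v * X) :=
            mul_le_mul (min_le_right _ _) (min_le_right _ _) hm2nn (by positivity)
          have step : 4 * m1 * m2 * w ≤ 4 * ((u * X) * (v * X)) * w := by
            have := mul_le_mul_of_nonneg_right
              (mul_le_mul_of_nonneg_left hA (by norm_num : (0:ℝ) ≤ 4)) hwnn
            linarith
          refine le_trans step (le_of_eq ?_)
          have hm : X = (2*π) ^ (-(1:ℝ)/2) * t ^ (-(1:ℝ)/2) := by
            rw [hX, Real.mul_rpow hπ.le ht.le]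
          have h2π : (2*π) ^ (-(1:ℝ)/2) * (2*π) ^ (-(1:ℝ)/2) = (2*π) ^ (-(1:ℝ)) := by
            rw [← Real.rpow_add hπ]; norm_num
          have ht2 : t ^ (-(1:ℝ)/2) * t ^ (-(1:ℝ)/2) = t ^ (-(1:ℝ)) := by
            rw [← Real.rpow_add ht]; norm_num
          have ht3 : t ^ (-(1:ℝ)) * t ^ (p/2 - 1) = t ^ (p/2 - 2) := by
            rw [← Real.rpow_add ht]; congr 1; ring
          rw [hm, hw, hC2def, ← ht3, ← h2π, ← ht2]; ring
  -- split the integral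
  have hsplit : (∫⁻ t in Ioi (0:ℝ), P {ω | t < τ ω} * ENNReal.ofReal (p/2 * t ^ (p/2 - 1)))
      = (∫⁻ t in Ioc (0:ℝ) t₀, P {ω | t < τ ω} * ENNReal.ofReal (p/2 * t ^ (p/2 - 1)))
        + (∫⁻ t in Ioi t₀, P {ω | t < τ ω} * ENNReal.ofReal (p/2 * t ^ (p/2 - 1))) := by
    rw [← Ioc_union_Ioi_eq_Ioi ht₀.le, lintegral_union measurableSet_Ioi Ioc_disjoint_Ioi_same]
  -- compute the two explicit integrals
  have intA : ∫ t in Ioc (0:ℝ) t₀, C1 * t ^ (p/2 - 3/2)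
      = C1 * (t₀ ^ (p/2 - 1/2) / (p/2 - 1/2)) := by
    rw [← intervalIntegral.integral_of_le ht₀.le, intervalIntegral.integral_const_mul,
      integral_rpow (Or.inl (by norm_num; linarith)),
      Real.zero_rpow (by norm_num; linarith), sub_zero,
      show p/2 - 3/2 + 1 = p/2 - 1/2 by ring]
  have intB : ∫ t in Ioi t₀, C2 * t ^ (p/2 - 2)
      = C2 * (-t₀ ^ (p/2 - 1) / (p/2 - 1)) := by
    rw [integral_const_mul, integral_Ioi_rpow_of_lt (by linarith) ht₀,
      show p/2 - 2 + 1 = p/2 - 1 by ring, neg_div]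
  have hintOnA : IntegrableOn (fun t => C1 * t ^ (p/2 - 3/2)) (Ioc (0:ℝ) t₀) :=
    (intervalIntegrable_iff_integrableOn_Ioc_of_le ht₀.le).mp
      ((intervalIntegral.intervalIntegrable_rpow' (by linarith)).const_mul C1)
  have hintOnB : IntegrableOn (fun t => C2 * t ^ (p/2 - 2)) (Ioi t₀) :=
    (integrableOn_Ioi_rpow_of_lt (by linarith) ht₀).const_mul C2
  have eqA : (∫⁻ t in Ioc (0:ℝ) t₀, ENNReal.ofReal (C1 * t ^ (p/2 - 3/2)))
      = ENNReal.ofReal (C1 * (t₀ ^ (p/2 - 1/2) / (p/2 - 1/2))) := by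
    rw [← intA, ← ofReal_integral_eq_lintegral_ofReal hintOnA]
    filter_upwards [self_mem_ae_restrict measurableSet_Ioc] with t ht
    have : (0:ℝ) < t := ht.1
    positivity
  have eqB : (∫⁻ t in Ioi t₀, ENNReal.ofReal (C2 * t ^ (p/2 - 2)))
      = ENNReal.ofReal (C2 * (-t₀ ^ (p/2 - 1) / (p/2 - 1))) := by
    rw [← intB, ← ofReal_integral_eq_lintegral_ofReal hintOnB]
    filter_upwards [self_mem_ae_restrict measurableSet_Ioi] with t ht
    have : (0:ℝ) < t := lt_trans ht₀ ht
    positivity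
  -- final real computation
  have e1 : (2*π) ^ (-(1:ℝ)/2) * t₀ ^ (p/2 - 1/2) = u ^ (p-1) / (2*π) ^ (p/2) := by
    have hu2 : (u^2 : ℝ) ^ (p/2 - 1/2) = u ^ (p-1) := by
      rw [← Real.rpow_natCast u 2, ← Real.rpow_mul hu.le]
      congr 1; push_cast; ring
    calc (2*π) ^ (-(1:ℝ)/2) * (u^2/(2*π)) ^ (p/2 - 1/2)
        = (2*π) ^ (-(1:ℝ)/2) * ((u^2) ^ (p/2 - 1/2) / (2*π) ^ (p/2 - 1/2)) := by
          rw [Real.div_rpow (sq_nonneg u) hπ.le]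
      _ = (u^2) ^ (p/2 - 1/2) * ((2*π) ^ (-(1:ℝ)/2) / (2*π) ^ (p/2 - 1/2)) := by ring
      _ = u ^ (p-1) * (2*π) ^ (-(1:ℝ)/2 - (p/2 - 1/2)) := by
          rw [← Real.rpow_sub hπ, hu2]
      _ = u ^ (p-1) / (2*π) ^ (p/2) := by
          rw [show -(1:ℝ)/2 - (p/2 - 1/2) = -(p/2) by ring, Real.rpow_neg hπ.le]
          exact (div_eq_mul_inv _ _).symm
  have e2 : (2*π) ^ (-(1:ℝ)) * t₀ ^ (p/2 - 1) = u ^ (p-2) / (2*π) ^ (p/2) := by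
    have hu2 : (u^2 : ℝ) ^ (p/2 - 1) = u ^ (p-2) := by
      rw [← Real.rpow_natCast u 2, ← Real.rpow_mul hu.le]
      congr 1; push_cast; ring
    calc (2*π) ^ (-(1:ℝ)) * (u^2/(2*π)) ^ (p/2 - 1)
        = (2*π) ^ (-(1:ℝ)) * ((u^2) ^ (p/2 - 1) / (2*π) ^ (p/2 - 1)) := by
          rw [Real.div_rpow (sq_nonneg u) hπ.le]
      _ = (u^2) ^ (p/2 - 1) * ((2*π) ^ (-(1:ℝ)) / (2*π) ^ (p/2 - 1)) := by ring
      _ = u ^ (p-2) * (2*π) ^ (-(1:ℝ) - (p/2 - 1)) := by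
          rw [← Real.rpow_sub hπ, hu2]
      _ = u ^ (p-2) / (2*π) ^ (p/2) := by
          rw [show -(1:ℝ) - (p/2 - 1) = -(p/2) by ring, Real.rpow_neg hπ.le]
          exact (div_eq_mul_inv _ _).symm
  have e3 : u * u ^ (p-2) = u ^ (p-1) := by
    have h := Real.rpow_add hu 1 (p-2)
    rw [Real.rpow_one] at h
    rw [← h]; congr 1; ring
  have hWpos : (0:ℝ) < (2*π) ^ (p/2) := by positivity
  have hfinal : C1 * (t₀ ^ (p/2 - 1/2) / (p/2 - 1/2)) + C2 * (-t₀ ^ (p/2 - 1) / (p/2 - 1))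
      ≤ (4 / (2*π) ^ (p/2)) * (p / ((p-1)*(2-p))) * (u ^ (p-1) * v) := by
    apply le_of_eq
    have hA : C1 * (t₀ ^ (p/2 - 1/2) / (p/2 - 1/2))
        = 4 * v * (p/2) * (u ^ (p-1) / (2*π) ^ (p/2)) / (p/2 - 1/2) := by
      rw [hC1def, ← e1]; ring
    have hB : C2 * (-t₀ ^ (p/2 - 1) / (p/2 - 1))
        = -(4 * u * v * (p/2) * (u ^ (p-2) / (2*π) ^ (p/2)) / (p/2 - 1)) := by
      rw [hC2def, ← e2]; ring
    rw [hA, hB, ← e3]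
    have h1 : p/2 - 1/2 ≠ 0 := by intro h; linarith [h]
    have h2 : p/2 - 1 ≠ 0 := by intro h; linarith [h]
    have h4 : p - 1 ≠ 0 := by intro h; linarith [h]
    have h5 : 2 - p ≠ 0 := by intro h; linarith [h]
    have h6 : p - 2 ≠ 0 := by intro h; linarith [h]
    have hscal : 4*(p/2)/(p/2 - 1/2) - 4*(p/2)/(p/2 - 1) = 4*(p/((p-1)*(2-p))) := by
      field_simp [h1, h2, h4, h5, h6]
      ring
    have lhs_eq : 4 * v * (p/2) * ((u * u ^ (p-2)) / (2*π) ^ (p/2)) / (p/2 - 1/2)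
          + -(4 * u * v * (p/2) * (u ^ (p-2) / (2*π) ^ (p/2)) / (p/2 - 1))
        = v * ((u * u ^ (p-2)) / (2*π) ^ (p/2))
            * (4*(p/2)/(p/2 - 1/2) - 4*(p/2)/(p/2 - 1)) := by ring
    rw [lhs_eq, hscal]
    ring
  -- assemble
  calc (∫⁻ ω, ENNReal.ofReal (τ ω ^ (p/2)) ∂P)
      ≤ ∫⁻ t in Ioi (0:ℝ), P {ω | t < τ ω} * ENNReal.ofReal (p/2 * t ^ (p/2 - 1)) := key
    _ = _ + _ := hsplit
    _ ≤ (∫⁻ t in Ioc (0:ℝ) t₀, ENNReal.ofReal (C1 * t ^ (p/2 - 3/2)))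
        + (∫⁻ t in Ioi t₀, ENNReal.ofReal (C2 * t ^ (p/2 - 2))) :=
        add_le_add (setLIntegral_mono' measurableSet_Ioc hb1)
          (setLIntegral_mono' measurableSet_Ioi hb2)
    _ = ENNReal.ofReal (C1 * (t₀ ^ (p/2 - 1/2) / (p/2 - 1/2)))
        + ENNReal.ofReal (C2 * (-t₀ ^ (p/2 - 1) / (p/2 - 1))) := by rw [eqA, eqB]
    _ = ENNReal.ofReal (C1 * (t₀ ^ (p/2 - 1/2) / (p/2 - 1/2))
          + C2 * (-t₀ ^ (p/2 - 1) / (p/2 - 1))) := by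
        rw [ENNReal.ofReal_add]
        · exact mul_nonneg (by positivity) (div_nonneg (by positivity) (by linarith))
        · refine mul_nonneg (by positivity) ?_
          rw [neg_div, ← div_neg]
          exact div_nonneg (by positivity) (by linarith)
    _ ≤ _ := ENNReal.ofReal_le_ofReal hfinal

/-- Refined moment bound from the reflection-principle tail bound: if a nonnegative
random variable `τ` satisfies `P[τ > t] ≤ 4 min(1, u(2πt)^{-1/2}) min(1, v(2πt)^{-1/2})`
for all `t > 0` (with `u, v > 0`), then for every `p ∈ (1,2)`,
`E[τ^{p/2}] ≤ (4/(2π)^{p/2}) · (p/((p−1)(2−p))) · min(u^{p−1} v, u v^{p−1})`. -/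
theorem exit_time_moment_bound_refined {Ω : Type*} [MeasurableSpace Ω] (P : Measure Ω)
    [IsProbabilityMeasure P] (τ : Ω → ℝ) (hτ : ∀ ω, 0 ≤ τ ω) (u v : ℝ)
    (hu : 0 < u) (hv : 0 < v)
    (htail : ∀ t : ℝ, 0 < t →
      P {ω | t < τ ω}
        ≤ ENNReal.ofReal
            (4 * min 1 (u * (2 * π * t) ^ (-(1 : ℝ) / 2))
              * min 1 (v * (2 * π * t) ^ (-(1 : ℝ) / 2))))
    (p : ℝ) (hp1 : 1 < p) (hp2 : p < 2) :
    (∫⁻ ω, ENNReal.ofReal (τ ω ^ (p / 2)) ∂P)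
      ≤ ENNReal.ofReal
          ((4 / (2 * π) ^ (p / 2)) * (p / ((p - 1) * (2 - p)))
            * min (u ^ (p - 1) * v) (u * v ^ (p - 1))) := by
  rcases le_total (u ^ (p - 1) * v) (u * v ^ (p - 1)) with h | h
  · rw [min_eq_left h]
    exact aux_bound P τ hτ u v hu hv htail p hp1 hp2
  · rw [min_eq_right h]
    have htail' : ∀ t : ℝ, 0 < t →
        P {ω | t < τ ω}
          ≤ ENNReal.ofReal
              (4 * min 1 (v * (2 * π * t) ^ (-(1 : ℝ) / 2))
                * min 1 (u * (2 * π * t) ^ (-(1 : ℝ) / 2))) := by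
      intro t ht
      refine le_trans (htail t ht) (le_of_eq ?_)
      rw [mul_right_comm]
    have hb := aux_bound P τ hτ v u hv hu htail' p hp1 hp2
    rw [show u * v ^ (p - 1) = v ^ (p - 1) * u from mul_comm _ _]
    exact hb
end

section
/- Let Y and Z be nonnegative integrable random variables on a probability space such that Y·Z is integrable and E[Y·Z] ≤ E[Y]·E[Z] (nonpositive correlation). Let h : [0,∞) → [0,∞) be concave and monotone increasing with Y·h(Z) integrable. Then E[Y·h(Z)] ≤ E[Y]·h(E[Z]). -/
open MeasureTheory Real Set

lemma supporting_line {h : ℝ → ℝ} (hconc : ConcaveOn ℝ (Ici 0) h)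
    (hmono : MonotoneOn h (Ici 0)) {m : ℝ} (hm : 0 < m) :
    ∃ s : ℝ, 0 ≤ s ∧ ∀ z, 0 ≤ z → h z ≤ h m + s * (z - m) := by
  set T : Set ℝ := (fun z => (h z - h m) / (z - m)) '' Ioi m with hT
  have hne : T.Nonempty := ⟨(h (m+1) - h m) / (m + 1 - m), ⟨m+1, mem_Ioi.2 (by linarith), rfl⟩⟩
  have hmem : m ∈ Ici (0:ℝ) := le_of_lt hm
  have hhalf : m/2 ∈ Ici (0:ℝ) := by simp; linarith
  have hbdd : BddAbove T := by
    refine ⟨(h m - h (m/2)) / (m - m/2), ?_⟩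
    rintro x ⟨w, hw, rfl⟩
    have := hconc.slope_anti_adjacent hhalf (le_of_lt (lt_trans hm hw))
      (by linarith : m/2 < m) hw
    simpa [slope_def_field] using this
  set s := sSup T with hs
  have hge : ∀ z, m < z → (h z - h m) / (z - m) ≤ s :=
    fun z hz => le_csSup hbdd ⟨z, hz, rfl⟩
  have hle : ∀ z, 0 ≤ z → z < m → s ≤ (h m - h z) / (m - z) := by
    intro z hz0 hzm
    refine csSup_le hne ?_
    rintro x ⟨w, hw, rfl⟩
    have := hconc.slope_anti_adjacent hz0 (le_of_lt (lt_trans hm hw)) hzm hw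
    simpa [slope_def_field] using this
  have hs0 : 0 ≤ s := by
    have h1 := hge (m+1) (by linarith)
    have h2 : h m ≤ h (m+1) := hmono hmem (by simp; linarith) (by linarith)
    have : (0:ℝ) ≤ (h (m+1) - h m) / (m + 1 - m) := by
      apply div_nonneg <;> linarith
    linarith
  refine ⟨s, hs0, fun z hz0 => ?_⟩
  rcases lt_trichotomy z m with hlt | heq | hgt
  · have := hle z hz0 hlt
    have hmz : 0 < m - z := by linarith
    rw [le_div_iff₀ hmz] at this
    nlinarith
  · simp [heq]
  · have := hge z hgt
    have hzm : 0 < z - m := by linarith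
    rw [div_le_iff₀ hzm] at this
    nlinarith

/-- If `Y` and `Z` are nonpositively correlated nonnegative random variables and
`h : [0,∞) → [0,∞)` is concave and monotone increasing, then
`E[Y h(Z)] ≤ E[Y] h(E[Z])`. -/
theorem concave_nonpos_corr_bound {Ω : Type*} [MeasurableSpace Ω] (P : Measure Ω)
    [IsProbabilityMeasure P] (Y Z : Ω → ℝ)
    (hYpos : ∀ ω, 0 ≤ Y ω) (hZpos : ∀ ω, 0 ≤ Z ω)
    (hYint : Integrable Y P) (hZint : Integrable Z P)
    (hYZint : Integrable (fun ω => Y ω * Z ω) P)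
    (hcorr : ∫ ω, Y ω * Z ω ∂P ≤ (∫ ω, Y ω ∂P) * ∫ ω, Z ω ∂P)
    (h : ℝ → ℝ) (hpos : ∀ a, 0 ≤ a → 0 ≤ h a)
    (hconc : ConcaveOn ℝ (Ici 0) h) (hmono : MonotoneOn h (Ici 0))
    (hYhZint : Integrable (fun ω => Y ω * h (Z ω)) P) :
    ∫ ω, Y ω * h (Z ω) ∂P ≤ (∫ ω, Y ω ∂P) * h (∫ ω, Z ω ∂P) := by
  set m := ∫ ω, Z ω ∂P with hm
  have hm0 : 0 ≤ m := integral_nonneg hZpos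
  have hY0 : 0 ≤ ∫ ω, Y ω ∂P := integral_nonneg hYpos
  rcases eq_or_lt_of_le hm0 with hmz | hmpos
  · -- m = 0, so Z = 0 a.e.
    have hZ0 : Z =ᵐ[P] 0 := by
      rw [← integral_eq_zero_iff_of_nonneg hZpos hZint]
      exact hmz.symm
    have heq : (fun ω => Y ω * h (Z ω)) =ᵐ[P] (fun ω => Y ω * h 0) := by
      filter_upwards [hZ0] with ω hω
      simp [hω]
    refine le_of_eq ?_
    calc ∫ ω, Y ω * h (Z ω) ∂P = ∫ ω, Y ω * h 0 ∂P := integral_congr_ae heq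
      _ = (∫ ω, Y ω ∂P) * h 0 := by rw [integral_mul_const]
      _ = (∫ ω, Y ω ∂P) * h m := by rw [← hmz]
  · obtain ⟨s, hs0, hline⟩ := supporting_line hconc hmono hmpos
    have hptwise : ∀ ω, Y ω * h (Z ω) ≤ Y ω * (h m + s * (Z ω - m)) :=
      fun ω => mul_le_mul_of_nonneg_left (hline (Z ω) (hZpos ω)) (hYpos ω)
    have hrhs_int : Integrable (fun ω => Y ω * (h m + s * (Z ω - m))) P := by
      have : (fun ω => Y ω * (h m + s * (Z ω - m))) =
          (fun ω => (h m - s * m) * Y ω + s * (Y ω * Z ω)) := by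
        funext ω; ring
      rw [this]
      exact ((hYint.const_mul _).add (hYZint.const_mul _))
    calc ∫ ω, Y ω * h (Z ω) ∂P
        ≤ ∫ ω, Y ω * (h m + s * (Z ω - m)) ∂P :=
          integral_mono hYhZint hrhs_int hptwise
      _ = ∫ ω, ((h m - s * m) * Y ω + s * (Y ω * Z ω)) ∂P := by
          congr 1; funext ω; ring
      _ = (h m - s * m) * ∫ ω, Y ω ∂P + s * ∫ ω, Y ω * Z ω ∂P := by
          rw [integral_add (hYint.const_mul _) (hYZint.const_mul _),
            integral_const_mul, integral_const_mul]
      _ ≤ (h m - s * m) * ∫ ω, Y ω ∂P + s * ((∫ ω, Y ω ∂P) * m) := by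
          have := mul_le_mul_of_nonneg_left hcorr hs0
          linarith
      _ = (∫ ω, Y ω ∂P) * h m := by ring
end
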